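/- Let β, b ∈ ℕ^m and A ∈ ℕ^{m×n} with columns A_1,…,A_n satisfy b ≤ β and A_k ≤ β for all k. Let 𝒫 := {𝐲 ∈ ℝ^p : 𝐲 ≥ 0, Θ𝐲 = 𝐛}, let H be the convex hull in ℝ^n of {x ∈ ℕ^n : Ax = b}, and let E be the 0/1 matrix with (E𝐲)_k = Σ_{u ≤ β−A_k} y[k,u]. Then (i) for every extreme point 𝐲 of 𝒫, the vector E𝐲 has nonnegative integer entries, satisfies A(E𝐲) = b, and belongs to H; and (ii) every extreme point of H equals E𝐲 for some extreme point 𝐲 of 𝒫. -/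

import Mathlib

/-- Row index set: vectors `w ∈ ℕ^m` with `w ≤ β` (entrywise). -/
abbrev RowIdx (m : ℕ) (β : Fin m → ℕ) : Type := ∀ j : Fin m, Fin (β j + 1)

/-- Column index set: pairs `(k, u)` with `1 ≤ k ≤ n` and `u ∈ ℕ^m`, `u ≤ β - A_k`. -/
abbrev ColIdx (m n : ℕ) (β : Fin m → ℕ) (A : Matrix (Fin m) (Fin n) ℕ) : Type :=
  Σ k : Fin n, ∀ j : Fin m, Fin (β j - A j k + 1)

/-- The network matrix `Θ`: `Θ[w;(k,u)] = -1` if `w = u`, `+1` if `w = u + A_k`,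
and `0` otherwise. -/
noncomputable def theta (m n : ℕ) (β : Fin m → ℕ) (A : Matrix (Fin m) (Fin n) ℕ) :
    Matrix (RowIdx m β) (ColIdx m n β A) ℝ := Matrix.of fun w c =>
  if (fun j => (w j : ℕ)) = (fun j => (c.2 j : ℕ)) then -1
  else if (fun j => (w j : ℕ)) = (fun j => (c.2 j : ℕ) + A j c.1) then 1 else 0

/-- The vector `𝐛`: `𝐛[w] = (1 if w = b else 0) - (1 if w = 0 else 0)`. -/
noncomputable def bvec (m : ℕ) (β b : Fin m → ℕ) : RowIdx m β → ℝ := fun w =>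
  (if (fun j => (w j : ℕ)) = b then 1 else 0)
    - (if (fun j => (w j : ℕ)) = (fun _ => (0 : ℕ)) then 1 else 0)

namespace Stmt12

variable {m n : ℕ} {A : Matrix (Fin m) (Fin n) ℕ} {β b : Fin m → ℕ}

def nc (w : RowIdx m β) : Fin m → ℕ := fun j => (w j : ℕ)
def tl (c : ColIdx m n β A) : Fin m → ℕ := fun j => (c.2 j : ℕ)
def hd (c : ColIdx m n β A) : Fin m → ℕ := fun j => (c.2 j : ℕ) + A j c.1
noncomputable def eN (β t : Fin m → ℕ) : RowIdx m β → ℝ := fun v => if nc v = t then 1 else 0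
def lev (w : Fin m → ℕ) : ℕ := ∑ j, w j

lemma theta_apply (w : RowIdx m β) (c : ColIdx m n β A) :
    theta m n β A w c = if nc w = tl c then -1 else if nc w = hd c then 1 else 0 := rfl

def mkNode (w : Fin m → ℕ) (h : ∀ j, w j ≤ β j) : RowIdx m β :=
  fun j => ⟨w j, Nat.lt_succ_of_le (h j)⟩

@[simp] lemma nc_mkNode (w : Fin m → ℕ) (h : ∀ j, w j ≤ β j) : nc (mkNode w h) = w := rfl

lemma nc_eq_iff (v : RowIdx m β) (w : Fin m → ℕ) (h : ∀ j, w j ≤ β j) :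
    nc v = w ↔ v = mkNode w h := by
  constructor
  · intro hv; funext j; exact Fin.ext (congrFun hv j)
  · rintro rfl; rfl

lemma tl_le_β (hA : ∀ k j, A j k ≤ β j) (c : ColIdx m n β A) (j : Fin m) : tl c j ≤ β j := by
  have := (c.2 j).isLt
  have := hA c.1 j
  simp only [tl]
  omega

lemma hd_le_β (hA : ∀ k j, A j k ≤ β j) (c : ColIdx m n β A) (j : Fin m) : hd c j ≤ β j := by
  have := (c.2 j).isLt
  have := hA c.1 j
  simp only [hd]
  omega

lemma lev_tl_lt_hd (c : ColIdx m n β A) (hnz : ∃ j, A j c.1 ≠ 0) : lev (tl c) < lev (hd c) := by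
  obtain ⟨j0, hj0⟩ := hnz
  have : ∀ j, tl c j ≤ hd c j := fun j => Nat.le_add_right _ _
  have hstrict : tl c j0 < hd c j0 := by simp only [tl, hd]; omega
  exact Finset.sum_lt_sum (fun j _ => this j) ⟨j0, Finset.mem_univ _, hstrict⟩

lemma tl_ne_hd (c : ColIdx m n β A) (hnz : ∃ j, A j c.1 ≠ 0) : tl c ≠ hd c := by
  intro h
  have := lev_tl_lt_hd c hnz
  rw [h] at this; omega

/-- Unit path flows from `w` to `b`. -/
def good (b : Fin m → ℕ) : (Fin m → ℕ) → List (ColIdx m n β A) → Prop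
  | w, [] => w = b
  | w, c :: l => tl c = w ∧ (∃ j, A j c.1 ≠ 0) ∧ good b (hd c) l

noncomputable def pf (l : List (ColIdx m n β A)) : ColIdx m n β A → ℝ :=
  fun c => (l.count c : ℝ)

lemma pf_nonneg (l : List (ColIdx m n β A)) (c : ColIdx m n β A) : 0 ≤ pf l c := by
  simp [pf]

lemma theta_col (hA : ∀ k j, A j k ≤ β j) (c : ColIdx m n β A) (hnz : ∃ j, A j c.1 ≠ 0)
    (v : RowIdx m β) : theta m n β A v c = eN β (hd c) v - eN β (tl c) v := by
  rw [theta_apply]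
  unfold eN
  by_cases h1 : nc v = tl c
  · have h2 : nc v ≠ hd c := by rw [h1]; exact tl_ne_hd c hnz
    have h3 : tl c ≠ hd c := tl_ne_hd c hnz
    simp [h1, h2, h3]
  · by_cases h2 : nc v = hd c
    · have h3 : hd c ≠ tl c := (tl_ne_hd c hnz).symm
      simp [h1, h2, h3]
    · simp [h1, h2]

lemma mulVec_single (c : ColIdx m n β A) :
    (theta m n β A).mulVec (Pi.single c 1) = fun v => theta m n β A v c := by
  funext v
  unfold Matrix.mulVec dotProduct
  rw [Finset.sum_eq_single c]
  · simp
  · intro c' _ hne; simp [Pi.single_eq_of_ne hne]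
  · intro h; exact absurd (Finset.mem_univ c) h

lemma mulVec_pf (hA : ∀ k j, A j k ≤ β j) {w : Fin m → ℕ} {l : List (ColIdx m n β A)}
    (hg : good b w l) :
    (theta m n β A).mulVec (pf l) = fun v => eN β b v - eN β w v := by
  induction l generalizing w with
  | nil =>
    obtain rfl : w = b := hg
    have : pf ([] : List (ColIdx m n β A)) = 0 := by
      funext c; simp [pf]
    rw [this, Matrix.mulVec_zero]
    funext v; simp
  | cons c l ih =>
    obtain ⟨htl, hnz, hg'⟩ := hg
    have hsplit : pf (c :: l) = pf l + Pi.single c 1 := by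
      funext c'
      simp only [pf, Pi.add_apply, List.count_cons]
      by_cases h : c' = c
      · subst h; simp
      · simp [h, Ne.symm h]
    rw [hsplit, Matrix.mulVec_add, ih hg', mulVec_single]
    funext v
    simp only [Pi.add_apply]
    rw [theta_col hA c hnz v, htl]
    ring

lemma bvec_eq : bvec m β b = fun v => eN β b v - eN β (fun _ => 0) v := rfl

/-- Levels along a good path are at least the level of the start. -/
lemma good_levels {w : Fin m → ℕ} {l : List (ColIdx m n β A)} (hg : good b w l) :
    ∀ c ∈ l, lev w ≤ lev (tl c) ∧ (∃ j, A j c.1 ≠ 0) := by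
  induction l generalizing w with
  | nil => intro c hc; simp at hc
  | cons c l ih =>
    obtain ⟨htl, hnz, hg'⟩ := hg
    intro c' hc'
    rcases List.mem_cons.1 hc' with rfl | hc'
    · exact ⟨htl ▸ le_refl _, hnz⟩
    · have := ih hg' c' hc'
      have h2 := lev_tl_lt_hd c hnz
      rw [htl] at h2
      exact ⟨le_trans (le_of_lt h2) this.1, this.2⟩

lemma good_lev_le_b {w : Fin m → ℕ} {l : List (ColIdx m n β A)} (hg : good b w l) :
    lev w ≤ lev b := by
  induction l generalizing w with
  | nil => obtain rfl : w = b := hg; exact le_refl _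
  | cons c l ih =>
    obtain ⟨htl, hnz, hg'⟩ := hg
    have := lev_tl_lt_hd c hnz
    rw [htl] at this
    exact le_trans (le_of_lt this) (ih hg')

lemma good_w_le (hbβ : ∀ j, b j ≤ β j) (hA : ∀ k j, A j k ≤ β j)
    {w : Fin m → ℕ} {l : List (ColIdx m n β A)} (hg : good b w l) : ∀ j, w j ≤ β j := by
  cases l with
  | nil => obtain rfl : w = b := hg; exact hbβ
  | cons c l =>
    obtain ⟨htl, _, _⟩ := hg
    exact htl ▸ tl_le_β hA c


lemma mulVec_apply (z : ColIdx m n β A → ℝ) (v : RowIdx m β) :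
    (theta m n β A).mulVec z v = ∑ c, theta m n β A v c * z c := rfl

lemma uniq (hbβ : ∀ j, b j ≤ β j) (hA : ∀ k j, A j k ≤ β j)
    {l : List (ColIdx m n β A)} {w : Fin m → ℕ} {z : ColIdx m n β A → ℝ}
    (hg : good b w l) (hsupp : ∀ c, c ∉ l → z c = 0)
    (hmul : (theta m n β A).mulVec z = fun v => eN β b v - eN β w v) :
    z = pf l := by
  induction l generalizing w z with
  | nil =>
    funext c
    rw [hsupp c List.not_mem_nil]
    simp [pf]
  | cons c l ih =>
    obtain ⟨htl, hnz, hg'⟩ := hg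
    have hwβ : ∀ j, w j ≤ β j := htl ▸ tl_le_β hA c
    set wN : RowIdx m β := mkNode w hwβ with hwN
    have hlevw : lev w < lev (hd c) := htl ▸ lev_tl_lt_hd c hnz
    have hzc : z c = 1 := by
      have hv := congrFun hmul wN
      rw [mulVec_apply] at hv
      have hsum : ∑ c', theta m n β A wN c' * z c' = - z c := by
        rw [Finset.sum_eq_single c]
        · rw [theta_apply]
          have : nc wN = tl c := by rw [nc_mkNode, htl]
          rw [if_pos this]; ring
        · intro c' _ hne
          by_cases hmem : c' ∈ l
          · have hlev := good_levels hg' c' hmem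
            have h1 : nc wN ≠ tl c' := by
              rw [nc_mkNode]
              intro h
              rw [h] at hlevw
              omega
            have h2 : nc wN ≠ hd c' := by
              rw [nc_mkNode]
              intro h
              have := lev_tl_lt_hd c' hlev.2
              rw [← h] at this
              omega
            rw [theta_apply, if_neg h1, if_neg h2]; ring
          · have : c' ∉ c :: l := by
              intro hmem'
              rcases List.mem_cons.1 hmem' with rfl | h
              · exact hne rfl
              · exact hmem h
            rw [hsupp c' this]; ring
        · intro h; exact absurd (Finset.mem_univ c) h
      have hwb : w ≠ b := by
        intro h
        have := good_lev_le_b hg'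
        rw [h] at hlevw
        omega
      have hrhs : eN β b wN - eN β w wN = -1 := by
        unfold eN
        rw [nc_mkNode] at *
        rw [if_neg hwb, if_pos rfl]
        ring
      rw [hsum, hrhs] at hv
      linarith
    have hmul' : (theta m n β A).mulVec (z - Pi.single c 1) =
        fun v => eN β b v - eN β (hd c) v := by
      rw [Matrix.mulVec_sub, mulVec_single, hmul]
      funext v
      simp only [Pi.sub_apply]
      rw [theta_col hA c hnz v, htl]
      ring
    have hsupp' : ∀ c', c' ∉ l → (z - Pi.single c 1 : ColIdx m n β A → ℝ) c' = 0 := by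
      intro c' hc'
      by_cases h : c' = c
      · subst h; simp [Pi.sub_apply, hzc]
      · have : c' ∉ c :: l := by
          intro hmem'
          rcases List.mem_cons.1 hmem' with rfl | hh
          · exact h rfl
          · exact hc' hh
        simp [Pi.sub_apply, hsupp c' this, Pi.single_eq_of_ne h]
    have hz' := ih hg' hsupp' hmul'
    funext c'
    have := congrFun hz' c'
    simp only [Pi.sub_apply] at this
    by_cases h : c' = c
    · subst h
      simp only [Pi.single_eq_same] at this
      simp only [pf, List.count_cons] at this ⊢
      simp only [beq_self_eq_true, if_true]
      push_cast
      linarith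
    · simp only [Pi.single_eq_of_ne h, sub_zero] at this
      simp only [pf, List.count_cons] at this ⊢
      have hbeq : (c == c') = false := beq_eq_false_iff_ne.mpr (Ne.symm h)
      rw [hbeq]
      simpa using this

lemma pf_extreme (hbβ : ∀ j, b j ≤ β j) (hA : ∀ k j, A j k ≤ β j)
    {l : List (ColIdx m n β A)} (hg : good b (fun _ => 0) l) :
    pf l ∈ Set.extremePoints ℝ
      {y : ColIdx m n β A → ℝ | (∀ c, 0 ≤ y c) ∧ (theta m n β A).mulVec y = bvec m β b} := by
  constructor
  · exact ⟨pf_nonneg l, by rw [mulVec_pf hA hg, bvec_eq]⟩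
  · rintro y1 ⟨h1p, h1m⟩ y2 ⟨h2p, h2m⟩ ⟨a, a', ha, ha', hsum, heq⟩
    have hz : ∀ yy : ColIdx m n β A → ℝ, (∀ c, 0 ≤ yy c) →
        ((theta m n β A).mulVec yy = bvec m β b) → (∀ c, c ∉ l → yy c = 0) → yy = pf l :=
      fun yy _ hm hsupp => uniq hbβ hA hg hsupp (by rw [hm, bvec_eq])
    have hsupp : ∀ c, c ∉ l → y1 c = 0 ∧ y2 c = 0 := by
      intro c hc
      have h0 : pf l c = 0 := by
        simp [pf, List.count_eq_zero_of_not_mem hc]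
      have h1 := congrFun heq c
      simp only [Pi.add_apply, Pi.smul_apply, smul_eq_mul] at h1
      rw [h0] at h1
      constructor <;> nlinarith [h1p c, h2p c]
    exact hz y1 h1p h1m (fun c hc => (hsupp c hc).1)


lemma sum_eN (t : Fin m → ℕ) (ht : ∀ j, t j ≤ β j) : ∑ v : RowIdx m β, eN β t v = 1 := by
  have : ∀ v : RowIdx m β, eN β t v = if v = mkNode t ht then 1 else 0 := by
    intro v
    unfold eN
    exact if_congr (nc_eq_iff v t ht) rfl rfl
  rw [Finset.sum_congr rfl (fun v _ => this v)]
  rw [Finset.sum_ite_eq' Finset.univ (mkNode t ht) (fun _ => (1 : ℝ))]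
  simp

lemma zerocol (hbβ : ∀ j, b j ≤ β j) (hA : ∀ k j, A j k ≤ β j)
    {y : ColIdx m n β A → ℝ} (hpos : ∀ c, 0 ≤ y c)
    (hm : (theta m n β A).mulVec y = bvec m β b)
    (c0 : ColIdx m n β A) (h0 : ∀ j, A j c0.1 = 0) : y c0 = 0 := by
  have hsum0 : ∑ v : RowIdx m β, (theta m n β A).mulVec y v = 0 := by
    rw [hm, bvec_eq]
    rw [Finset.sum_sub_distrib, sum_eN b hbβ, sum_eN (fun _ => 0) (fun j => Nat.zero_le _)]
    ring
  have hswap : ∑ v : RowIdx m β, (theta m n β A).mulVec y v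
      = ∑ c, (∑ v, theta m n β A v c) * y c := by
    simp only [mulVec_apply]
    rw [Finset.sum_comm]
    congr 1
    funext c
    rw [Finset.sum_mul]
  have hcol : ∀ c : ColIdx m n β A, (∑ v, theta m n β A v c) * y c ≤ 0 := by
    intro c
    by_cases hz : ∀ j, A j c.1 = 0
    · have hhd : hd c = tl c := by funext j; simp [hd, tl, hz j]
      have : ∀ v, theta m n β A v c = - eN β (tl c) v := by
        intro v
        rw [theta_apply, hhd]
        unfold eN
        by_cases h1 : nc v = tl c <;> simp [h1]
      rw [Finset.sum_congr rfl (fun v _ => this v), Finset.sum_neg_distrib,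
        sum_eN (tl c) (tl_le_β hA c)]
      have := hpos c
      nlinarith
    · push_neg at hz
      have : ∀ v, theta m n β A v c = eN β (hd c) v - eN β (tl c) v :=
        theta_col hA c hz
      rw [Finset.sum_congr rfl (fun v _ => this v), Finset.sum_sub_distrib,
        sum_eN (hd c) (hd_le_β hA c), sum_eN (tl c) (tl_le_β hA c)]
      simp
  have heach := (Finset.sum_eq_zero_iff_of_nonpos (fun c _ => hcol c)).1
    (by rw [← hswap, hsum0]) c0 (Finset.mem_univ c0)
  have hc0 : ∑ v, theta m n β A v c0 = -1 := by
    have hhd : hd c0 = tl c0 := by funext j; simp [hd, tl, h0 j]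
    have : ∀ v, theta m n β A v c0 = - eN β (tl c0) v := by
      intro v
      rw [theta_apply, hhd]
      unfold eN
      by_cases h1 : nc v = tl c0 <;> simp [h1]
    rw [Finset.sum_congr rfl (fun v _ => this v), Finset.sum_neg_distrib,
      sum_eN (tl c0) (tl_le_β hA c0)]
  rw [hc0] at heach
  linarith

lemma circ (hA : ∀ k j, A j k ≤ β j) {y : ColIdx m n β A → ℝ}
    (hpos : ∀ c, 0 ≤ y c) (hm : (theta m n β A).mulVec y = 0) : y = 0 := by
  have aux : ∀ d : ℕ, ∀ c : ColIdx m n β A, lev (tl c) < d → y c = 0 := by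
    intro d
    induction d with
    | zero => intro c h; omega
    | succ d ihd =>
      intro c hlev
      set wN : RowIdx m β := mkNode (tl c) (tl_le_β hA c) with hwN
      have hv : ∑ c', theta m n β A wN c' * y c' = 0 := by
        have := congrFun hm wN
        rw [mulVec_apply] at this
        simpa using this
      have hterms : ∀ c' : ColIdx m n β A, theta m n β A wN c' * y c' ≤ 0 := by
        intro c'
        rw [theta_apply]
        by_cases h1 : nc wN = tl c'
        · rw [if_pos h1]
          have := hpos c'
          nlinarith
        · rw [if_neg h1]
          by_cases h2 : nc wN = hd c'
          · rw [if_pos h2]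
            have hne : tl c' ≠ hd c' := fun h => h1 (h ▸ h2)
            have hnz : ∃ j, A j c'.1 ≠ 0 := by
              by_contra hno
              push_neg at hno
              exact hne (by funext j; simp [tl, hd, hno j])
            have hlt : lev (tl c') < lev (tl c) := by
              have h3 := lev_tl_lt_hd c' hnz
              have h4 : nc wN = tl c := rfl
              rw [h4] at h2
              rw [← h2] at h3
              exact h3
            rw [ihd c' (by omega)]
            simp
          · rw [if_neg h2]; simp
      have heach := (Finset.sum_eq_zero_iff_of_nonpos (fun c' _ => hterms c')).1 hv c
        (Finset.mem_univ c)
      have hth : theta m n β A wN c = -1 := by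
        rw [theta_apply, if_pos (show nc wN = tl c from rfl)]
      rw [hth] at heach
      linarith
  funext c
  simp only [Pi.zero_apply]
  exact aux (lev (tl c) + 1) c (Nat.lt_succ_self _)


lemma lev_le_levβ (w : Fin m → ℕ) (hw : ∀ j, w j ≤ β j) : lev w ≤ lev β :=
  Finset.sum_le_sum (fun j _ => hw j)

lemma path_aux (hbβ : ∀ j, b j ≤ β j) (hA : ∀ k j, A j k ≤ β j)
    {y : ColIdx m n β A → ℝ} (hpos : ∀ c, 0 ≤ y c)
    (hm : (theta m n β A).mulVec y = bvec m β b) :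
    ∀ d : ℕ, ∀ c : ColIdx m n β A, lev β - lev (tl c) < d → 0 < y c →
      ∃ l, good b (tl c) l ∧ ∀ c' ∈ l, 0 < y c' := by
  intro d
  induction d with
  | zero => intro c h; omega
  | succ d ihd =>
    intro c hlev hyc
    have hnz : ∃ j, A j c.1 ≠ 0 := by
      by_contra hno
      push_neg at hno
      have := zerocol hbβ hA hpos hm c hno
      linarith
    by_cases hhb : hd c = b
    · exact ⟨[c], ⟨rfl, hnz, hhb⟩, by
        intro c' hc'
        rcases List.mem_singleton.1 hc' with rfl
        exact hyc⟩
    · set hN : RowIdx m β := mkNode (hd c) (hd_le_β hA c) with hhN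
      have hcons : ∑ c', theta m n β A hN c' * y c' = 0 := by
        have hv := congrFun hm hN
        rw [mulVec_apply] at hv
        rw [hv]
        unfold bvec
        have h1 : (fun j => ((hN j : ℕ))) = hd c := rfl
        rw [h1, if_neg hhb]
        have h2 : hd c ≠ (fun _ => (0 : ℕ)) := by
          intro h
          have h3 := lev_tl_lt_hd c hnz
          rw [h] at h3
          simp [lev] at h3
        rw [if_neg h2]
        ring
      have hout : ∃ c'', tl c'' = hd c ∧ 0 < y c'' := by
        by_contra hno
        push_neg at hno
        have hterms : ∀ c' : ColIdx m n β A, 0 ≤ theta m n β A hN c' * y c' := by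
          intro c'
          rw [theta_apply]
          by_cases h1 : nc hN = tl c'
          · rw [if_pos h1]
            have h2 : y c' ≤ 0 := hno c' h1.symm
            have := hpos c'
            nlinarith
          · rw [if_neg h1]
            by_cases h2 : nc hN = hd c'
            · rw [if_pos h2]; simpa using hpos c'
            · rw [if_neg h2]; simp
        have hc : theta m n β A hN c * y c = y c := by
          rw [theta_apply]
          have h1 : nc hN ≠ tl c := by
            have : nc hN = hd c := rfl
            rw [this]
            exact (tl_ne_hd c hnz).symm
          rw [if_neg h1, if_pos (show nc hN = hd c from rfl)]
          ring
        have hle := Finset.single_le_sum (f := fun c' => theta m n β A hN c' * y c')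
          (fun c' _ => hterms c') (Finset.mem_univ c)
        rw [hc, hcons] at hle
        linarith
      obtain ⟨c'', htl'', hyc''⟩ := hout
      have hlev1 : lev (tl c) < lev (tl c'') := by
        rw [htl'']
        exact lev_tl_lt_hd c hnz
      have hlev2 : lev (tl c'') ≤ lev β := lev_le_levβ _ (tl_le_β hA c'')
      obtain ⟨l'', hg'', hpos''⟩ := ihd c'' (by omega) hyc''
      refine ⟨c :: l'', ⟨rfl, hnz, htl'' ▸ hg''⟩, ?_⟩
      intro c' hc'
      rcases List.mem_cons.1 hc' with rfl | h
      · exact hyc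
      · exact hpos'' c' h

lemma exists_eps {α : Type*} (f : α → ℝ) (l : List α) (h : ∀ c ∈ l, 0 < f c) :
    ∃ ε : ℝ, 0 < ε ∧ ε ≤ 1/2 ∧ ∀ c ∈ l, ε ≤ f c := by
  induction l with
  | nil => exact ⟨1/2, by norm_num, le_refl _, by simp⟩
  | cons c l ih =>
    obtain ⟨ε, hε, hε2, hεl⟩ := ih (fun c' hc' => h c' (List.mem_cons_of_mem c hc'))
    refine ⟨min ε (f c), ?_, ?_, ?_⟩
    · exact lt_min hε (h c List.mem_cons_self)
    · exact le_trans (min_le_left _ _) hε2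
    · intro c' hc'
      rcases List.mem_cons.1 hc' with rfl | hc'
      · exact min_le_right _ _
      · exact le_trans (min_le_left _ _) (hεl c' hc')

lemma good_pairwise {w : Fin m → ℕ} {l : List (ColIdx m n β A)} (hg : good b w l) :
    l.Pairwise (fun c c' => lev (tl c) < lev (tl c')) := by
  induction l generalizing w with
  | nil => exact List.Pairwise.nil
  | cons c l ih =>
    obtain ⟨htl, hnz, hg'⟩ := hg
    refine List.Pairwise.cons ?_ (ih hg')
    intro c' hc'
    have h1 := (good_levels hg' c' hc').1
    have h2 := lev_tl_lt_hd c hnz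
    omega

lemma good_nodup {w : Fin m → ℕ} {l : List (ColIdx m n β A)} (hg : good b w l) :
    l.Nodup :=
  (good_pairwise hg).imp (fun h => by intro heq; rw [heq] at h; omega)

lemma extreme_eq_pf (hbβ : ∀ j, b j ≤ β j) (hA : ∀ k j, A j k ≤ β j)
    {y : ColIdx m n β A → ℝ}
    (hy : y ∈ Set.extremePoints ℝ
      {y : ColIdx m n β A → ℝ | (∀ c, 0 ≤ y c) ∧ (theta m n β A).mulVec y = bvec m β b}) :
    ∃ l : List (ColIdx m n β A), good b (fun _ => 0) l ∧ y = pf l := by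
  obtain ⟨⟨hpos, hm⟩, hext⟩ := hy
  by_cases hb0 : b = fun _ => (0 : ℕ)
  · have hm0 : (theta m n β A).mulVec y = 0 := by
      rw [hm, bvec_eq]
      funext v
      subst hb0
      simp
    have hy0 := circ hA hpos hm0
    refine ⟨[], hb0.symm, ?_⟩
    rw [hy0]
    funext c
    simp [pf]
  · -- find a starting arc out of node 0
    have hstart : ∃ c : ColIdx m n β A, tl c = (fun _ => 0) ∧ 0 < y c := by
      set v0 : RowIdx m β := mkNode (fun _ => 0) (fun j => Nat.zero_le _) with hv0
      have hv : ∑ c, theta m n β A v0 c * y c = -1 := by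
        have h1 := congrFun hm v0
        rw [mulVec_apply] at h1
        rw [h1]
        unfold bvec
        have h2 : (fun j => ((v0 j : ℕ))) = (fun _ => (0 : ℕ)) := rfl
        rw [h2, if_neg (Ne.symm hb0), if_pos rfl]
        ring
      by_contra hno
      push_neg at hno
      have hterms : ∀ c : ColIdx m n β A, 0 ≤ theta m n β A v0 c * y c := by
        intro c
        rw [theta_apply]
        by_cases h1 : nc v0 = tl c
        · rw [if_pos h1]
          have h3 : y c = 0 := by
            have h2 := hno c h1.symm
            have := hpos c
            linarith
          rw [h3]; ring_nf; exact le_refl _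
        · rw [if_neg h1]
          by_cases h2 : nc v0 = hd c
          · rw [if_pos h2]; simpa using hpos c
          · rw [if_neg h2]; simp
      have := Finset.sum_nonneg (fun c (_ : c ∈ Finset.univ) => hterms c)
      rw [hv] at this
      linarith
    obtain ⟨c0, htl0, hyc0⟩ := hstart
    obtain ⟨l, hg, hposl⟩ := path_aux hbβ hA hpos hm (lev β - lev (tl c0) + 1) c0
      (Nat.lt_succ_self _) hyc0
    rw [htl0] at hg
    refine ⟨l, hg, ?_⟩
    -- epsilon argument
    obtain ⟨ε, hε, hε2, hεl⟩ := exists_eps y l hposl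
    have hε1 : ε < 1 := by linarith
    have h1ε : (0:ℝ) < 1 - ε := by linarith
    have hcount : ∀ c, pf l c ≤ 1 := by
      intro c
      have := List.nodup_iff_count_le_one.1 (good_nodup hg) c
      simp only [pf]
      exact_mod_cast this
    set p := pf l with hp
    set y2 : ColIdx m n β A → ℝ := (1 - ε)⁻¹ • (y - ε • p) with hy2
    have hy2mem : (∀ c, 0 ≤ y2 c) ∧ (theta m n β A).mulVec y2 = bvec m β b := by
      constructor
      · intro c
        simp only [hy2, Pi.smul_apply, Pi.sub_apply, smul_eq_mul]
        apply mul_nonneg (le_of_lt (inv_pos.2 h1ε))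
        by_cases hcl : c ∈ l
        · have h2 := hεl c hcl
          have h3 := hcount c
          nlinarith
        · have : p c = 0 := by simp [hp, pf, List.count_eq_zero_of_not_mem hcl]
          rw [this]
          have := hpos c
          nlinarith
      · have hmp : (theta m n β A).mulVec p = bvec m β b := by
          rw [hp, mulVec_pf hA hg, bvec_eq]
        rw [hy2, Matrix.mulVec_smul, Matrix.mulVec_sub, Matrix.mulVec_smul, hm, hmp]
        funext v
        simp only [Pi.smul_apply, Pi.sub_apply, smul_eq_mul]
        field_simp
    have hpmem : (∀ c, 0 ≤ p c) ∧ (theta m n β A).mulVec p = bvec m β b := by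
      exact ⟨pf_nonneg l, by rw [hp, mulVec_pf hA hg, bvec_eq]⟩
    have hseg : y ∈ openSegment ℝ p y2 := by
      refine ⟨ε, 1 - ε, hε, h1ε, by ring, ?_⟩
      rw [hy2, smul_inv_smul₀ (ne_of_gt h1ε)]
      funext c
      simp only [Pi.add_apply, Pi.smul_apply, Pi.sub_apply, smul_eq_mul]
      ring
    exact (hext hpmem hy2mem hseg).symm


lemma sum_count_cons (c : ColIdx m n β A) (l : List (ColIdx m n β A)) (k : Fin n) :
    ∑ u : (∀ j' : Fin m, Fin (β j' - A j' k + 1)), ((c :: l).count (⟨k, u⟩ : ColIdx m n β A))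
      = (∑ u : (∀ j' : Fin m, Fin (β j' - A j' k + 1)), l.count (⟨k, u⟩ : ColIdx m n β A))
        + (if k = c.1 then 1 else 0) := by
  obtain ⟨k0, u0⟩ := c
  simp only [List.count_cons, beq_iff_eq]
  rw [Finset.sum_add_distrib]
  congr 1
  by_cases hk : k = k0
  · subst hk
    rw [if_pos rfl]
    have hcond : ∀ u : (∀ j' : Fin m, Fin (β j' - A j' k + 1)),
        ((⟨k, u0⟩ : ColIdx m n β A) = ⟨k, u⟩) ↔ u = u0 := by
      intro u
      constructor
      · intro h
        have := Sigma.mk.inj_iff.1 h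
        exact (eq_of_heq this.2).symm
      · rintro rfl; rfl
    rw [Finset.sum_congr rfl (fun u _ => if_congr (hcond u) rfl rfl)]
    rw [Finset.sum_ite_eq' Finset.univ u0 (fun _ => (1:ℕ))]
    simp
  · rw [if_neg hk]
    apply Finset.sum_eq_zero
    intro u _
    rw [if_neg]
    intro h
    exact hk ((Sigma.mk.inj_iff.1 h).1).symm

lemma good_count {w : Fin m → ℕ} {l : List (ColIdx m n β A)} (hg : good b w l) :
    ∀ j, w j + ∑ k, A j k * (∑ u : (∀ j' : Fin m, Fin (β j' - A j' k + 1)),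
      l.count (⟨k, u⟩ : ColIdx m n β A)) = b j := by
  induction l generalizing w with
  | nil =>
    obtain rfl : w = b := hg
    intro j
    simp [List.count_nil]
  | cons c l ih =>
    obtain ⟨htl, hnz, hg'⟩ := hg
    intro j
    have h1 : ∀ k : Fin n, ∑ u : (∀ j' : Fin m, Fin (β j' - A j' k + 1)),
        (c :: l).count (⟨k, u⟩ : ColIdx m n β A)
        = (∑ u : (∀ j' : Fin m, Fin (β j' - A j' k + 1)), l.count (⟨k, u⟩ : ColIdx m n β A))
          + (if k = c.1 then 1 else 0) := fun k => sum_count_cons c l k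
    rw [Finset.sum_congr rfl (fun k _ => by rw [h1 k, Nat.mul_add])]
    rw [Finset.sum_add_distrib]
    have h2 : ∑ k, A j k * (if k = c.1 then 1 else 0) = A j c.1 := by
      simp only [mul_ite, mul_one, mul_zero]
      rw [Finset.sum_ite_eq' Finset.univ c.1 (fun k => A j k)]
      simp
    rw [h2]
    have h3 := ih hg' j
    have h4 : hd c j = tl c j + A j c.1 := rfl
    rw [htl] at h4
    omega

lemma build (hbβ : ∀ j, b j ≤ β j) (hA : ∀ k j, A j k ≤ β j) :
    ∀ (N : ℕ) (x : Fin n → ℕ) (w : Fin m → ℕ),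
    (∑ k, x k ≤ N) → (∀ j, w j + ∑ k, A j k * x k = b j) →
    (∀ k, x k ≠ 0 → ∃ j, A j k ≠ 0) →
    ∃ l : List (ColIdx m n β A), good b w l ∧
      ∀ k, (∑ u : (∀ j' : Fin m, Fin (β j' - A j' k + 1)),
        l.count (⟨k, u⟩ : ColIdx m n β A)) = x k := by
  intro N
  induction N with
  | zero =>
    intro x w hsum hinv hnz
    have hx : ∀ k, x k = 0 := by
      intro k
      have := Finset.single_le_sum (f := x) (fun k _ => Nat.zero_le _) (Finset.mem_univ k)
      omega
    have hw : w = b := by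
      funext j
      have h1 := hinv j
      rw [Finset.sum_eq_zero (fun k _ => by rw [hx k, Nat.mul_zero])] at h1
      omega
    exact ⟨[], hw, fun k => by simp [List.count_nil, hx k]⟩
  | succ N ih =>
    intro x w hsum hinv hnz
    by_cases hle : ∑ k, x k ≤ N
    · exact ih x w hle hinv hnz
    · have hpos : ∃ k0, x k0 ≠ 0 := by
        by_contra h
        push_neg at h
        rw [Finset.sum_eq_zero (fun k _ => h k)] at hle
        omega
      obtain ⟨k0, hk0⟩ := hpos
      have hxk0 : 1 ≤ x k0 := Nat.one_le_iff_ne_zero.2 hk0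
      have hbound : ∀ j, w j + A j k0 ≤ β j := by
        intro j
        have h1 : A j k0 * x k0 ≤ ∑ k, A j k * x k :=
          Finset.single_le_sum (f := fun k => A j k * x k) (fun k _ => Nat.zero_le _)
            (Finset.mem_univ k0)
        have h2 : A j k0 ≤ A j k0 * x k0 := Nat.le_mul_of_pos_right _ hxk0
        have h3 := hinv j
        have h4 := hbβ j
        omega
      set c : ColIdx m n β A :=
        ⟨k0, fun j => ⟨w j, by have := hbound j; have := hA k0 j; omega⟩⟩ with hc
      have htl : tl c = w := rfl
      have hhd : hd c = fun j => w j + A j k0 := rfl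
      set x' := Function.update x k0 (x k0 - 1) with hx'
      have hsplit : ∀ (f : Fin n → ℕ),
          f k0 + ∑ k ∈ Finset.univ.erase k0, f k = ∑ k, f k :=
        fun f => Finset.add_sum_erase _ f (Finset.mem_univ k0)
      have hx'k : ∀ k, k ≠ k0 → x' k = x k := fun k hk => Function.update_of_ne hk _ _
      have hx'k0 : x' k0 = x k0 - 1 := Function.update_self _ _ _
      have hsum' : ∑ k, x' k ≤ N := by
        have e1 := hsplit x'
        have e2 := hsplit x
        have e3 : ∑ k ∈ Finset.univ.erase k0, x' k = ∑ k ∈ Finset.univ.erase k0, x k :=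
          Finset.sum_congr rfl (fun k hk => hx'k k (Finset.ne_of_mem_erase hk))
        omega
      have hinv' : ∀ j, (w j + A j k0) + ∑ k, A j k * x' k = b j := by
        intro j
        have e1 := hsplit (fun k => A j k * x' k)
        have e2 := hsplit (fun k => A j k * x k)
        have e3 : ∑ k ∈ Finset.univ.erase k0, A j k * x' k
            = ∑ k ∈ Finset.univ.erase k0, A j k * x k :=
          Finset.sum_congr rfl (fun k hk => by rw [hx'k k (Finset.ne_of_mem_erase hk)])
        have e4 : A j k0 * x k0 = A j k0 * (x k0 - 1) + A j k0 := by
          conv_lhs => rw [show x k0 = (x k0 - 1) + 1 by omega]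
          ring
        have e5 := hinv j
        simp only [hx'k0] at e1
        omega
      have hnz' : ∀ k, x' k ≠ 0 → ∃ j, A j k ≠ 0 := by
        intro k hk
        by_cases h : k = k0
        · exact h ▸ hnz k0 hk0
        · exact hnz k (by rwa [hx'k k h] at hk)
      obtain ⟨l', hg', hcnt'⟩ := ih x' (fun j => w j + A j k0) hsum' hinv' hnz'
      refine ⟨c :: l', ⟨htl, hnz k0 hk0, ?_⟩, ?_⟩
      · rw [hhd]; exact hg'
      · intro k
        rw [sum_count_cons]
        have hc1 : c.1 = k0 := rfl
        rw [hc1]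
        by_cases h : k = k0
        · subst h
          rw [if_pos rfl, hcnt' k, hx'k0]
          omega
        · rw [if_neg h, hcnt' k, hx'k k h]
          omega

end Stmt12

/-- (i) For every extreme point `𝐲` of `𝒫`, the vector `E𝐲` is a nonnegative
integer vector with `A(E𝐲) = b` lying in the integer hull `H`; (ii) every
extreme point of `H` is `E𝐲` for some extreme point `𝐲` of `𝒫`. -/
theorem stmt_12 (m n : ℕ) (hm : 0 < m) (hn : 0 < n)
    (A : Matrix (Fin m) (Fin n) ℕ) (β b : Fin m → ℕ)
    (hb : ∀ j, b j ≤ β j) (hA : ∀ k j, A j k ≤ β j) :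
    (∀ y ∈ Set.extremePoints ℝ
        {y : ColIdx m n β A → ℝ | (∀ c, 0 ≤ y c) ∧ (theta m n β A).mulVec y = bvec m β b},
      (∀ k : Fin n, ∃ N : ℕ,
        (∑ u : ∀ j' : Fin m, Fin (β j' - A j' k + 1), y ⟨k, u⟩) = (N : ℝ)) ∧
      (∀ j, ∑ k, (A j k : ℝ) * (∑ u : ∀ j' : Fin m, Fin (β j' - A j' k + 1), y ⟨k, u⟩)
          = (b j : ℝ)) ∧
      ((fun k => ∑ u : ∀ j' : Fin m, Fin (β j' - A j' k + 1), y ⟨k, u⟩) ∈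
        convexHull ℝ ((fun x : Fin n → ℕ => fun k => (x k : ℝ)) ''
          {x : Fin n → ℕ | ∀ j, ∑ k, A j k * x k = b j}))) ∧
    (∀ v ∈ Set.extremePoints ℝ
        (convexHull ℝ ((fun x : Fin n → ℕ => fun k => (x k : ℝ)) ''
          {x : Fin n → ℕ | ∀ j, ∑ k, A j k * x k = b j})),
      ∃ y ∈ Set.extremePoints ℝ
        {y : ColIdx m n β A → ℝ | (∀ c, 0 ≤ y c) ∧ (theta m n β A).mulVec y = bvec m β b},
        v = fun k => ∑ u : ∀ j' : Fin m, Fin (β j' - A j' k + 1), y ⟨k, u⟩) := by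
  constructor
  · intro y hy
    obtain ⟨l, hg, hyeq⟩ := Stmt12.extreme_eq_pf hb hA hy
    subst hyeq
    have hcast : ∀ k : Fin n, (∑ u : ∀ j' : Fin m, Fin (β j' - A j' k + 1), Stmt12.pf l ⟨k, u⟩)
        = ((∑ u : ∀ j' : Fin m, Fin (β j' - A j' k + 1),
            l.count (⟨k, u⟩ : ColIdx m n β A) : ℕ) : ℝ) := by
      intro k
      simp only [Stmt12.pf]
      exact (Nat.cast_sum _ _).symm
    have hS : ∀ j, ∑ k, A j k * (∑ u : ∀ j' : Fin m, Fin (β j' - A j' k + 1),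
        l.count (⟨k, u⟩ : ColIdx m n β A)) = b j := by
      intro j
      have hq := Stmt12.good_count hg j
      simpa using hq
    refine ⟨fun k => ⟨_, hcast k⟩, ?_, ?_⟩
    · intro j
      rw [Finset.sum_congr rfl (fun k _ => by rw [hcast k])]
      exact_mod_cast congrArg (Nat.cast : ℕ → ℝ) (hS j)
    · exact subset_convexHull ℝ _
        ⟨_, hS, funext fun k => (hcast k).symm⟩
  · intro v hv
    obtain ⟨x, hxS, rfl⟩ := extremePoints_convexHull_subset hv
    have hx0 : ∀ k, (∀ j, A j k = 0) → x k = 0 := by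
      intro k hk
      by_contra hxk
      have hx1 : 1 ≤ x k := Nat.one_le_iff_ne_zero.2 hxk
      have key : ∀ t : ℕ, ∀ j, ∑ k', A j k' * (Function.update x k t) k' = b j := by
        intro t j
        rw [← hxS j]
        apply Finset.sum_congr rfl
        intro k' _
        by_cases h : k' = k
        · subst h
          rw [Function.update_self, hk j]
          simp
        · rw [Function.update_of_ne h]
      have h1 : (fun k' => ((Function.update x k (x k - 1)) k' : ℝ)) ∈
          convexHull ℝ ((fun x : Fin n → ℕ => fun k => (x k : ℝ)) ''
            {x : Fin n → ℕ | ∀ j, ∑ k, A j k * x k = b j}) :=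
        subset_convexHull ℝ _ ⟨_, key (x k - 1), rfl⟩
      have h2 : (fun k' => ((Function.update x k (x k + 1)) k' : ℝ)) ∈
          convexHull ℝ ((fun x : Fin n → ℕ => fun k => (x k : ℝ)) ''
            {x : Fin n → ℕ | ∀ j, ∑ k, A j k * x k = b j}) :=
        subset_convexHull ℝ _ ⟨_, key (x k + 1), rfl⟩
      have hseg : (fun k' => (x k' : ℝ)) ∈ openSegment ℝ
          (fun k' => ((Function.update x k (x k - 1)) k' : ℝ))
          (fun k' => ((Function.update x k (x k + 1)) k' : ℝ)) := by
        refine ⟨1/2, 1/2, by norm_num, by norm_num, by norm_num, ?_⟩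
        funext k'
        simp only [Pi.add_apply, Pi.smul_apply, smul_eq_mul]
        by_cases h : k' = k
        · subst h
          rw [Function.update_self, Function.update_self, Nat.cast_sub hx1]
          push_cast
          ring
        · rw [Function.update_of_ne h, Function.update_of_ne h]
          ring
      have hcontra := hv.2 h1 h2 hseg
      have := congrFun hcontra k
      simp only [Function.update_self] at this
      rw [Nat.cast_sub hx1] at this
      push_cast at this
      linarith
    have hinv : ∀ j, (fun _ => 0 : Fin m → ℕ) j + ∑ k, A j k * x k = b j := by
      intro j
      simpa using hxS j
    obtain ⟨l, hg, hcnt⟩ := Stmt12.build hb hA (∑ k, x k) x (fun _ => 0) le_rfl hinv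
      (fun k hk => by
        by_contra h
        push_neg at h
        exact hk (hx0 k h))
    refine ⟨Stmt12.pf l, Stmt12.pf_extreme hb hA hg, ?_⟩
    funext k
    have : (∑ u : ∀ j' : Fin m, Fin (β j' - A j' k + 1), Stmt12.pf l ⟨k, u⟩)
        = ((∑ u : ∀ j' : Fin m, Fin (β j' - A j' k + 1),
            l.count (⟨k, u⟩ : ColIdx m n β A) : ℕ) : ℝ) := by
      simp only [Stmt12.pf]
      exact (Nat.cast_sum _ _).symm
    rw [this, hcnt k]
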